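/- Let P be a set of n ≥ d + 1 points in ℝ^d, let α = ⌈n/(d+1)⌉, and let C be the center of P (assumed nonempty). Then either C has dimension d, or there exist an integer s with 1 ≤ s ≤ d and a convex polyhedron I of dimension d − s such that C ⊆ I and I contains at least n − (s+1)(α − 1) points of P. -/

import Mathlib

/-- A centerpoint of a finite set `P` of points in `ℝ^d`: every closed halfspace
containing `c` contains at least `⌈|P|/(d+1)⌉` points of `P`. -/
def IsCenterpoint {d : ℕ} (P : Finset (EuclideanSpace ℝ (Fin d)))
    (c : EuclideanSpace ℝ (Fin d)) : Prop :=
  ∀ (f : EuclideanSpace ℝ (Fin d) →ₗ[ℝ] ℝ) (a : ℝ), f ≠ 0 → a ≤ f c →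
    ⌈(P.card : ℚ) / (d + 1)⌉₊ ≤ (P.filter fun q => a ≤ f q).card

/-- A convex polyhedron in `ℝ^d`: an intersection of finitely many closed halfspaces. -/
def IsConvexPolyhedron {d : ℕ} (S : Set (EuclideanSpace ℝ (Fin d))) : Prop :=
  ∃ (m : ℕ) (f : Fin m → (EuclideanSpace ℝ (Fin d) →ₗ[ℝ] ℝ)) (a : Fin m → ℝ),
    (∀ i, f i ≠ 0) ∧ S = ⋂ i, {x | a i ≤ f i x}

/-- The dimension of a subset of `ℝ^d`: the rank of the direction of its affine span. -/
noncomputable def setDim {d : ℕ} (S : Set (EuclideanSpace ℝ (Fin d))) : ℕ :=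
  Module.finrank ℝ (affineSpan ℝ S).direction

open RealInnerProductSpace Finset

namespace CenterAux

variable {d : ℕ}

/-- The convex hull of a compact set in a Euclidean space is compact. -/
theorem isCompact_convexHull' {N : Set (EuclideanSpace ℝ (Fin d))} (hN : IsCompact N) :
    IsCompact (convexHull ℝ N) := by
  rcases N.eq_empty_or_nonempty with rfl | ⟨n₀, hn₀⟩
  · simp only [convexHull_empty]; exact isCompact_empty
  classical
  set D := Module.finrank ℝ (EuclideanSpace ℝ (Fin d)) with hD
  set S : Set ((Fin (D+1) → ℝ) × (Fin (D+1) → EuclideanSpace ℝ (Fin d))) :=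
    (stdSimplex ℝ (Fin (D+1))) ×ˢ (Set.univ.pi fun _ => N) with hS
  have hScomp : IsCompact S := (isCompact_stdSimplex _ _).prod (isCompact_univ_pi fun _ => hN)
  have hφ : Continuous fun p : (Fin (D+1) → ℝ) × (Fin (D+1) → EuclideanSpace ℝ (Fin d)) =>
      ∑ i, p.1 i • p.2 i := by
    refine continuous_finset_sum _ fun i _ => ?_
    exact ((continuous_apply i).comp continuous_fst).smul ((continuous_apply i).comp continuous_snd)
  have himg : convexHull ℝ N = (fun p : (Fin (D+1) → ℝ) × (Fin (D+1) → EuclideanSpace ℝ (Fin d)) =>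
      ∑ i, p.1 i • p.2 i) '' S := by
    apply Set.Subset.antisymm
    · intro x hx
      obtain ⟨ι, hfin, z, w, hrange, hindep, hpos, hsum1, hcombo⟩ :=
        eq_pos_convex_span_of_mem_convexHull hx
      have hcard : Fintype.card ι ≤ D + 1 := by
        have h1 := hindep.card_le_finrank_succ
        have h2 : Module.finrank ℝ (vectorSpan ℝ (Set.range z)) ≤ D := Submodule.finrank_le _
        omega
      obtain ⟨e⟩ : Nonempty (ι ↪ Fin (D+1)) := by
        rwa [Function.Embedding.nonempty_iff_card_le, Fintype.card_fin]
      set w' : Fin (D+1) → ℝ := fun j => ∑ i ∈ Finset.univ.filter (fun i => e i = j), w i with hw'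
      set z' : Fin (D+1) → EuclideanSpace ℝ (Fin d) := fun j =>
        if h : ∃ i, e i = j then z h.choose else n₀ with hz'
      have hz'e : ∀ i : ι, z' (e i) = z i := by
        intro i
        have h : ∃ i', e i' = e i := ⟨i, rfl⟩
        simp only [hz', dif_pos h]
        exact congrArg z (e.injective h.choose_spec)
      refine ⟨(w', z'), ⟨?_, ?_⟩, ?_⟩
      · constructor
        · intro j
          exact Finset.sum_nonneg fun i _ => (hpos i).le
        · rw [← hsum1]
          exact Finset.sum_fiberwise _ _ _
      · intro j _
        simp only [hz']
        split
        · exact hrange ⟨_, rfl⟩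
        · exact hn₀
      · simp only
        rw [← hcombo]
        have hjj : ∀ j, w' j • z' j = ∑ i ∈ Finset.univ.filter (fun i => e i = j), w i • z i := by
          intro j
          rw [hw', Finset.sum_smul]
          refine Finset.sum_congr rfl fun i hi => ?_
          have : e i = j := (Finset.mem_filter.mp hi).2
          rw [← this, hz'e]
        rw [Finset.sum_congr rfl fun j _ => hjj j]
        exact Finset.sum_fiberwise _ _ _
    · rintro x ⟨⟨w, z⟩, ⟨hw, hz⟩, rfl⟩
      exact Convex.sum_mem (convex_convexHull ℝ N) (fun i _ => hw.1 i) hw.2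
        fun i _ => subset_convexHull ℝ N (hz i trivial)
  rw [himg]
  exact hScomp.image hφ

variable (P : Finset (EuclideanSpace ℝ (Fin d))) (α : ℕ)

/-- the `α`-th largest value of `⟪u, ·⟫` over `P`, as a max-min. -/
noncomputable def hfun (hne : (P.powersetCard α).Nonempty) (hα : 1 ≤ α)
    (u : EuclideanSpace ℝ (Fin d)) : ℝ :=
  (P.powersetCard α).attach.sup' (by rwa [Finset.attach_nonempty_iff])
    fun Q => Q.1.inf' (Finset.card_pos.mp (by
      rw [(Finset.mem_powersetCard.mp Q.2).2]; omega)) fun q => ⟪u, q⟫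

variable {P α}
variable (hne : (P.powersetCard α).Nonempty) (hα : 1 ≤ α)

lemma inf'_le_hfun {u : EuclideanSpace ℝ (Fin d)} {Q : Finset (EuclideanSpace ℝ (Fin d))}
    (hQ : Q ∈ P.powersetCard α) (hQne : Q.Nonempty) :
    Q.inf' hQne (fun q => ⟪u, q⟫) ≤ hfun P α hne hα u :=
  Finset.le_sup' (f := fun Q : {x // x ∈ P.powersetCard α} =>
    Q.1.inf' (Finset.card_pos.mp (by rw [(Finset.mem_powersetCard.mp Q.2).2]; omega))
      fun q => ⟪u, q⟫) (Finset.mem_attach _ ⟨Q, hQ⟩)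

lemma exists_hfun_witness (u : EuclideanSpace ℝ (Fin d)) :
    ∃ Q : Finset (EuclideanSpace ℝ (Fin d)), Q ⊆ P ∧ Q.card = α ∧
      ∀ q ∈ Q, hfun P α hne hα u ≤ ⟪u, q⟫ := by
  obtain ⟨Q, _, hEq⟩ := Finset.exists_mem_eq_sup'
    (s := (P.powersetCard α).attach) (by rwa [Finset.attach_nonempty_iff])
    (fun Q : {x // x ∈ P.powersetCard α} =>
      Q.1.inf' (Finset.card_pos.mp (by rw [(Finset.mem_powersetCard.mp Q.2).2]; omega))
        fun q => ⟪u, q⟫)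
  obtain ⟨hsub, hcard⟩ := Finset.mem_powersetCard.mp Q.2
  refine ⟨Q.1, hsub, hcard, fun q hq => ?_⟩
  calc hfun P α hne hα u = _ := hEq
  _ ≤ ⟪u, q⟫ := Finset.inf'_le _ hq

lemma card_filter_gt_hfun_le (u : EuclideanSpace ℝ (Fin d)) :
    (P.filter fun q => hfun P α hne hα u < ⟪u, q⟫).card ≤ α - 1 := by
  by_contra hcon
  push_neg at hcon
  have hαle : α ≤ (P.filter fun q => hfun P α hne hα u < ⟪u, q⟫).card := by omega
  obtain ⟨Q, hQsub, hQcard⟩ := Finset.exists_subset_card_eq hαle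
  have hQP : Q ∈ P.powersetCard α :=
    Finset.mem_powersetCard.mpr ⟨hQsub.trans (Finset.filter_subset _ _), hQcard⟩
  have hQne : Q.Nonempty := Finset.card_pos.mp (by omega)
  have h1 := inf'_le_hfun hne hα (u := u) hQP hQne
  obtain ⟨q₁, hq₁, hq₁eq⟩ := Finset.exists_mem_eq_inf' hQne (fun q => ⟪u, q⟫)
  have h2 : hfun P α hne hα u < ⟪u, q₁⟫ := (Finset.mem_filter.mp (hQsub hq₁)).2
  rw [hq₁eq] at h1
  linarith

lemma hfun_le_add (R : ℝ) (hR : ∀ q ∈ P, ‖q‖ ≤ R) (u u' : EuclideanSpace ℝ (Fin d)) :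
    hfun P α hne hα u ≤ hfun P α hne hα u' + R * ‖u - u'‖ := by
  obtain ⟨Q, hQsub, hQcard, hQ⟩ := exists_hfun_witness hne hα u
  have hQP : Q ∈ P.powersetCard α := Finset.mem_powersetCard.mpr ⟨hQsub, hQcard⟩
  have hQne : Q.Nonempty := Finset.card_pos.mp (by omega)
  obtain ⟨q₀, hq₀, hq₀eq⟩ := Finset.exists_mem_eq_inf' hQne (fun q => ⟪u', q⟫)
  have h1 : hfun P α hne hα u ≤ ⟪u, q₀⟫ := hQ q₀ hq₀
  have h2 : ⟪u - u', q₀⟫ ≤ R * ‖u - u'‖ := by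
    calc ⟪u - u', q₀⟫ ≤ ‖u - u'‖ * ‖q₀‖ := real_inner_le_norm _ _
    _ ≤ ‖u - u'‖ * R := by
        have := hR q₀ (hQsub hq₀)
        exact mul_le_mul_of_nonneg_left this (norm_nonneg _)
    _ = R * ‖u - u'‖ := mul_comm _ _
  have h3 : Q.inf' hQne (fun q => ⟪u', q⟫) ≤ hfun P α hne hα u' :=
    inf'_le_hfun hne hα hQP hQne
  rw [hq₀eq] at h3
  have h4 : ⟪u, q₀⟫ = ⟪u', q₀⟫ + ⟪u - u', q₀⟫ := by
    rw [inner_sub_left]; ring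
  linarith

lemma continuous_hfun : Continuous (hfun P α hne hα) := by
  obtain ⟨R, hR0, hR⟩ : ∃ R : ℝ, 0 ≤ R ∧ ∀ q ∈ P, ‖q‖ ≤ R := by
    rcases P.eq_empty_or_nonempty with rfl | hPne
    · exact ⟨0, le_rfl, by simp⟩
    · refine ⟨P.sup' hPne fun q => ‖q‖, ?_, fun q hq => Finset.le_sup' _ hq⟩
      obtain ⟨q, hq⟩ := hPne
      exact le_trans (norm_nonneg q) (Finset.le_sup' _ hq)
  have hlip : LipschitzWith R.toNNReal (hfun P α hne hα) := by
    apply LipschitzWith.of_dist_le_mul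
    intro u u'
    rw [Real.dist_eq, abs_sub_le_iff]
    constructor
    · have := hfun_le_add hne hα R hR u u'
      rw [dist_eq_norm]
      rw [Real.coe_toNNReal R hR0]
      linarith
    · have := hfun_le_add hne hα R hR u' u
      rw [dist_eq_norm, ← norm_sub_rev]
      rw [Real.coe_toNNReal R hR0]
      linarith
  exact hlip.continuous

lemma isCenterpoint_iff (hcard : ⌈(P.card : ℚ) / (d + 1)⌉₊ = α)
    (c : EuclideanSpace ℝ (Fin d)) :
    IsCenterpoint P c ↔ ∀ u : EuclideanSpace ℝ (Fin d), ‖u‖ = 1 →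
      ⟪u, c⟫ ≤ hfun P α hne hα u := by
  constructor
  · intro h u hu
    set f : EuclideanSpace ℝ (Fin d) →ₗ[ℝ] ℝ := (innerSL ℝ u).toLinearMap with hf
    have hfapp : ∀ x, f x = ⟪u, x⟫ := fun x => rfl
    have hf0 : f ≠ 0 := by
      intro h0
      have hnull : f u = 0 := by rw [h0]; rfl
      rw [hfapp, real_inner_self_eq_norm_sq, hu] at hnull
      norm_num at hnull
    have hcp := h f ⟪u, c⟫ hf0 (le_of_eq (hfapp c).symm)
    rw [hcard] at hcp
    obtain ⟨Q, hQsub, hQcard⟩ := Finset.exists_subset_card_eq hcp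
    have hQP : Q ∈ P.powersetCard α := Finset.mem_powersetCard.mpr
      ⟨hQsub.trans (Finset.filter_subset _ _), hQcard⟩
    have hQne : Q.Nonempty := Finset.card_pos.mp (by omega)
    refine le_trans ?_ (inf'_le_hfun hne hα hQP hQne)
    refine Finset.le_inf' _ _ fun q hq => ?_
    have := (Finset.mem_filter.mp (hQsub hq)).2
    rwa [hfapp] at this
  · intro h f a hf0 ha
    set w : EuclideanSpace ℝ (Fin d) :=
      (InnerProductSpace.toDual ℝ (EuclideanSpace ℝ (Fin d))).symm
        (LinearMap.toContinuousLinearMap f) with hwdef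
    have hw : ∀ x, ⟪w, x⟫ = f x := by
      intro x
      rw [hwdef, InnerProductSpace.toDual_symm_apply]
      simp
    have hw0 : w ≠ 0 := by
      intro h0
      obtain ⟨x, hx⟩ := DFunLike.ne_iff.mp hf0
      apply hx
      rw [← hw x, h0]
      simp
    have hnw : (0:ℝ) < ‖w‖ := norm_pos_iff.mpr hw0
    set u : EuclideanSpace ℝ (Fin d) := ‖w‖⁻¹ • w with hudef
    have hu : ‖u‖ = 1 := by
      rw [hudef, norm_smul, norm_inv, norm_norm, inv_mul_cancel₀ hnw.ne']
    have huapp : ∀ x, ⟪u, x⟫ = ‖w‖⁻¹ * f x := by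
      intro x
      rw [hudef, real_inner_smul_left, hw]
    have hcu := h u hu
    obtain ⟨Q, hQsub, hQcard, hQ⟩ := exists_hfun_witness hne hα u
    rw [hcard]
    have hQfil : Q ⊆ P.filter fun q => a ≤ f q := by
      intro q hq
      rw [Finset.mem_filter]
      refine ⟨hQsub hq, ?_⟩
      have h1 : ⟪u, c⟫ ≤ ⟪u, q⟫ := le_trans hcu (hQ q hq)
      rw [huapp, huapp] at h1
      have h2 : f c ≤ f q := (mul_le_mul_iff_right₀ (inv_pos.mpr hnw)).mp h1
      linarith
    calc α = Q.card := hQcard.symm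
    _ ≤ _ := Finset.card_le_card hQfil

end CenterAux

open CenterAux in
set_option maxHeartbeats 2000000 in
/-- the center of `n ≥ d + 1` points in `ℝ^d` is either `d`-dimensional,
or it is contained in a `(d - s)`-dimensional convex polyhedron containing at least
`n - (s+1)(α - 1)` points of `P`, where `α = ⌈n/(d+1)⌉`, for some `1 ≤ s ≤ d`. -/
theorem center_dim_or_small_polyhedron
    (d : ℕ) (P : Finset (EuclideanSpace ℝ (Fin d))) (n : ℕ) (hn : P.card = n)
    (hnd : d + 1 ≤ n) (α : ℕ) (hα : α = ⌈(n : ℚ) / (d + 1)⌉₊)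
    (C : Set (EuclideanSpace ℝ (Fin d))) (hC : C = {c | IsCenterpoint P c})
    (hCne : C.Nonempty) :
    setDim C = d ∨
    ∃ s : ℕ, 1 ≤ s ∧ s ≤ d ∧
      ∃ I : Set (EuclideanSpace ℝ (Fin d)), IsConvexPolyhedron I ∧
        setDim I = d - s ∧ C ⊆ I ∧
        (n : ℤ) - (s + 1) * ((α : ℤ) - 1) ≤ ((P : Set (EuclideanSpace ℝ (Fin d))) ∩ I).ncard := by
  classical
  by_cases hdim : setDim C = d
  · exact Or.inl hdim
  right
  have hα1 : 1 ≤ α := by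
    rw [hα]
    rw [Nat.one_le_ceil_iff]
    have : (0:ℚ) < n := by
      have : (1:ℚ) ≤ n := by exact_mod_cast Nat.one_le_iff_ne_zero.mpr (by omega)
      linarith
    positivity
  have hαn : α ≤ n := by
    rw [hα]
    apply Nat.ceil_le.mpr
    rw [div_le_iff₀ (by positivity)]
    have h1 : (1:ℚ) ≤ (d:ℚ) + 1 := by
      have : (0:ℚ) ≤ d := by positivity
      linarith
    nlinarith [show (0:ℚ) ≤ n by positivity]
  have hne : (P.powersetCard α).Nonempty :=
    Finset.powersetCard_nonempty.mpr (by rw [hn]; exact hαn)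
  set h := CenterAux.hfun P α hne hα1 with hh
  have hcard : ⌈(P.card : ℚ) / (d + 1)⌉₊ = α := by rw [hn, hα]
  have hCchar : ∀ c, c ∈ C ↔ ∀ u : EuclideanSpace ℝ (Fin d), ‖u‖ = 1 → ⟪u, c⟫ ≤ h u := by
    intro c
    rw [hC]
    exact isCenterpoint_iff hne hα1 hcard c
  have hconv : Convex ℝ C := by
    intro x hx y hy a b ha hb hab
    rw [hCchar] at hx hy ⊢
    intro u hu
    have h1 := hx u hu
    have h2 := hy u hu
    have : ⟪u, a • x + b • y⟫ = a * ⟪u, x⟫ + b * ⟪u, y⟫ := by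
      rw [inner_add_right, real_inner_smul_right, real_inner_smul_right]
    rw [this]
    calc a * ⟪u, x⟫ + b * ⟪u, y⟫ ≤ a * h u + b * h u :=
          add_le_add (mul_le_mul_of_nonneg_left h1 ha) (mul_le_mul_of_nonneg_left h2 hb)
    _ = h u := by rw [← add_mul, hab, one_mul]
  obtain ⟨x₀, hx₀i⟩ := hCne.intrinsicInterior hconv
  have hx₀C : x₀ ∈ C := intrinsicInterior_subset hx₀i
  have hx₀le : ∀ u : EuclideanSpace ℝ (Fin d), ‖u‖ = 1 → ⟪u, x₀⟫ ≤ h u :=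
    (hCchar x₀).mp hx₀C
  set A := affineSpan ℝ C with hA
  set D := A.direction with hDdef
  have hkd : Module.finrank ℝ D < d := by
    have h1 : Module.finrank ℝ D ≤ d := by
      have := Submodule.finrank_le D
      rwa [finrank_euclideanSpace_fin] at this
    have h2 : setDim C = Module.finrank ℝ D := rfl
    omega
  set N : Set (EuclideanSpace ℝ (Fin d)) := {u | ‖u‖ = 1 ∧ ⟪u, x₀⟫ = h u} with hN
  -- tight functionals are constant on C
  have hconst : ∀ u ∈ N, ∀ y ∈ C, ⟪u, y⟫ = ⟪u, x₀⟫ := by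
    rintro u ⟨hu1, hu2⟩ y hy
    have hyle : ⟪u, y⟫ ≤ h u := (hCchar y).mp hy u hu1
    -- find a point of C on the far side of x₀ from y
    obtain ⟨x', hx'int, hx'eq⟩ := hx₀i
    have hyA : y ∈ A := subset_affineSpan ℝ C hy
    have hx₀A : x₀ ∈ A := subset_affineSpan ℝ C hx₀C
    have hmemA : ∀ t : ℝ, t • (y -ᵥ x₀) +ᵥ x₀ ∈ A := fun t =>
      AffineSubspace.smul_vsub_vadd_mem A t hyA hx₀A hx₀A
    set ψ : ℝ → A := fun t => ⟨t • (y - x₀) + x₀, hmemA t⟩ with hψ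
    have hψcont : Continuous ψ := by
      apply Continuous.subtype_mk
      exact (continuous_id.smul continuous_const).add continuous_const
    have hψ0 : ψ 0 = x' := by
      apply Subtype.ext
      simp only [hψ, zero_smul, zero_add]
      exact hx'eq.symm
    have hopen : IsOpen (ψ ⁻¹' (interior ((Subtype.val : A → EuclideanSpace ℝ (Fin d)) ⁻¹' C))) :=
      hψcont.isOpen_preimage _ isOpen_interior
    have h0mem : (0:ℝ) ∈ ψ ⁻¹' (interior ((Subtype.val : A → EuclideanSpace ℝ (Fin d)) ⁻¹' C)) := by
      rw [Set.mem_preimage, hψ0]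
      exact hx'int
    obtain ⟨ε, hε, hball⟩ := Metric.isOpen_iff.mp hopen 0 h0mem
    have htmem : -(ε/2) ∈ Metric.ball (0:ℝ) ε := by
      rw [Metric.mem_ball, Real.dist_eq]
      rw [sub_zero, abs_neg, abs_of_pos (by linarith)]
      linarith
    have hc' : (-(ε/2)) • (y - x₀) + x₀ ∈ C := by
      have := interior_subset (hball htmem)
      exact this
    have hc'le : ⟪u, (-(ε/2)) • (y - x₀) + x₀⟫ ≤ h u := (hCchar _).mp hc' u hu1
    rw [inner_add_right, real_inner_smul_right, inner_sub_right] at hc'le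
    have hyge : ⟪u, x₀⟫ ≤ ⟪u, y⟫ := by nlinarith [hu2]
    rw [hu2]
    linarith [hyle, hu2.ge, hu2.le, hyge]
  have hNW : ∀ u ∈ N, u ∈ Dᗮ := by
    intro u hu
    rw [Submodule.mem_orthogonal]
    have hker : D ≤ LinearMap.ker ((innerSL ℝ u).toLinearMap) := by
      rw [hDdef, hA, direction_affineSpan, vectorSpan_def]
      apply Submodule.span_le.mpr
      rintro v ⟨y, hy, z', hz', rfl⟩
      simp only [SetLike.mem_coe, LinearMap.mem_ker]
      show ⟪u, y -ᵥ z'⟫ = 0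
      have : y -ᵥ z' = y - z' := rfl
      rw [this, inner_sub_right, hconst u hu y hy, hconst u hu z' hz']
      ring
    intro v hv
    have : ⟪u, v⟫ = 0 := hker hv
    rw [real_inner_comm] at this
    exact this
  -- the tight normals positively span zero
  have h0hull : (0 : EuclideanSpace ℝ (Fin d)) ∈ convexHull ℝ N := by
    by_contra h0
    have hNclosed : IsClosed N := by
      apply IsClosed.inter
      · exact isClosed_eq continuous_norm continuous_const
      · exact isClosed_eq (Continuous.inner continuous_id continuous_const)
          (CenterAux.continuous_hfun hne hα1)
    have hNsub : N ⊆ Metric.sphere 0 1 := by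
      intro u hu
      rw [mem_sphere_zero_iff_norm]
      exact hu.1
    have hNcomp : IsCompact N := (isCompact_sphere 0 1).of_isClosed_subset hNclosed hNsub
    have hHull : IsCompact (convexHull ℝ N) := isCompact_convexHull' hNcomp
    have hWne : Dᗮ ≠ ⊥ := by
      intro hbot
      rw [Submodule.orthogonal_eq_bot_iff] at hbot
      rw [hbot] at hkd
      rw [finrank_top] at hkd
      rw [finrank_euclideanSpace_fin] at hkd
      omega
    obtain ⟨v, hvW, hv0, hvN⟩ : ∃ v, v ∈ Dᗮ ∧ v ≠ 0 ∧ ∀ u ∈ N, ⟪u, v⟫ < 0 := by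
      rcases N.eq_empty_or_nonempty with hNe | hNne
      · obtain ⟨v, hvW, hv0⟩ := Submodule.exists_mem_ne_zero_of_ne_bot hWne
        exact ⟨v, hvW, hv0, by rw [hNe]; simp⟩
      · obtain ⟨f, t, hft, ht0⟩ := geometric_hahn_banach_closed_point
          (convex_convexHull ℝ N) hHull.isClosed h0
        have ht0' : t < 0 := by simpa using ht0
        set wv := (InnerProductSpace.toDual ℝ (EuclideanSpace ℝ (Fin d))).symm f with hwv
        have hwvapp : ∀ x, ⟪wv, x⟫ = f x := fun x => InnerProductSpace.toDual_symm_apply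
        set v := (Dᗮ.orthogonalProjectionOnto wv : EuclideanSpace ℝ (Fin d)) with hv
        have hvW : v ∈ Dᗮ := (Dᗮ.orthogonalProjectionOnto wv).2
        have hvapp : ∀ u ∈ Dᗮ, ⟪u, v⟫ = ⟪u, wv⟫ := by
          intro u hu
          have h1 : wv - v ∈ Dᗮᗮ := Dᗮ.sub_starProjection_mem_orthogonal wv
          have h2 : ⟪u, wv - v⟫ = 0 := (Submodule.mem_orthogonal _ _).mp h1 u hu
          rw [inner_sub_right] at h2
          linarith
        have hvN : ∀ u ∈ N, ⟪u, v⟫ < 0 := by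
          intro u hu
          rw [hvapp u (hNW u hu), real_inner_comm, hwvapp]
          calc f u < t := hft u (subset_convexHull ℝ N hu)
          _ < 0 := ht0'
        refine ⟨v, hvW, ?_, hvN⟩
        intro hveq
        obtain ⟨u, hu⟩ := hNne
        have := hvN u hu
        rw [hveq, inner_zero_right] at this
        linarith
    -- find a uniform gap on the compact set of "bad" directions
    set K := Metric.sphere (0 : EuclideanSpace ℝ (Fin d)) 1 ∩ {u | 0 ≤ ⟪u, v⟫} with hK
    have hKcomp : IsCompact K := (isCompact_sphere 0 1).inter_right
      (isClosed_le continuous_const (Continuous.inner continuous_id continuous_const))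
    set g := fun u : EuclideanSpace ℝ (Fin d) => h u - ⟪u, x₀⟫ with hg
    have hgcont : Continuous g := (CenterAux.continuous_hfun hne hα1).sub
      (Continuous.inner continuous_id continuous_const)
    have hgpos : ∀ u ∈ K, 0 < g u := by
      rintro u ⟨hu1, hu2⟩
      rw [mem_sphere_zero_iff_norm] at hu1
      have hge : 0 ≤ g u := sub_nonneg.mpr (hx₀le u hu1)
      rcases eq_or_lt_of_le hge with heq | hlt
      · exfalso
        have huN : u ∈ N := ⟨hu1, by rw [hg] at heq; simp only at heq; linarith⟩
        have := hvN u huN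
        have hu2' : 0 ≤ ⟪u, v⟫ := hu2
        linarith
      · exact hlt
    obtain ⟨δ, hδpos, hδ⟩ : ∃ δ : ℝ, 0 < δ ∧ ∀ u ∈ K, δ ≤ g u := by
      rcases K.eq_empty_or_nonempty with hKe | hKne
      · exact ⟨1, one_pos, by rw [hKe]; simp⟩
      · obtain ⟨u₁, hu₁K, hu₁min⟩ := hKcomp.exists_isMinOn hKne hgcont.continuousOn
        exact ⟨g u₁, hgpos _ hu₁K, fun u hu => hu₁min hu⟩
    have hvnorm : (0:ℝ) < ‖v‖ := norm_pos_iff.mpr hv0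
    set ε := δ / ‖v‖ with hε
    have hεpos : 0 < ε := div_pos hδpos hvnorm
    have hx₁C : x₀ + ε • v ∈ C := by
      rw [hCchar]
      intro u hu1
      have hexp : ⟪u, x₀ + ε • v⟫ = ⟪u, x₀⟫ + ε * ⟪u, v⟫ := by
        rw [inner_add_right, real_inner_smul_right]
      rcases le_or_gt 0 ⟪u, v⟫ with hpos | hneg
      · have huK : u ∈ K := ⟨mem_sphere_zero_iff_norm.mpr hu1, hpos⟩
        have h1 : δ ≤ g u := hδ u huK
        have h2 : ⟪u, v⟫ ≤ ‖v‖ := by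
          calc ⟪u, v⟫ ≤ ‖u‖ * ‖v‖ := real_inner_le_norm _ _
          _ = ‖v‖ := by rw [hu1, one_mul]
        have h3 : ε * ⟪u, v⟫ ≤ δ := by
          calc ε * ⟪u, v⟫ ≤ ε * ‖v‖ := mul_le_mul_of_nonneg_left h2 hεpos.le
          _ = δ := div_mul_cancel₀ δ hvnorm.ne'
        rw [hexp]
        rw [hg] at h1
        simp only at h1
        linarith
      · have h1 : ⟪u, x₀⟫ ≤ h u := hx₀le u hu1
        have h2 : ε * ⟪u, v⟫ < 0 := mul_neg_of_pos_of_neg hεpos hneg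
        rw [hexp]
        linarith
    -- contradiction: C extends out of its affine span
    have hmem1 : x₀ + ε • v ∈ A := subset_affineSpan ℝ C hx₁C
    have hmem0 : x₀ ∈ A := subset_affineSpan ℝ C hx₀C
    have hdir : (x₀ + ε • v) -ᵥ x₀ ∈ D := AffineSubspace.vsub_mem_direction hmem1 hmem0
    have hεvD : ε • v ∈ D := by
      have hveq : (x₀ + ε • v) -ᵥ x₀ = ε • v := by
        show (x₀ + ε • v) - x₀ = ε • v
        abel
      rwa [hveq] at hdir
    have hεvW : ε • v ∈ Dᗮ := Submodule.smul_mem _ ε hvW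
    have hzero : ⟪ε • v, ε • v⟫ = 0 := (Submodule.mem_orthogonal _ _).mp hεvW _ hεvD
    have : ε • v = 0 := inner_self_eq_zero.mp hzero
    rcases smul_eq_zero.mp this with h' | h'
    · exact hεpos.ne' h'
    · exact hv0 h'
  -- extract a positive combination by Carathéodory
  obtain ⟨ι, hfin, z, w, hrange, hindep, hpos, hsum1, hcombo⟩ :=
    eq_pos_convex_span_of_mem_convexHull h0hull
  have hιne : Nonempty ι := by
    by_contra hni
    rw [not_nonempty_iff] at hni
    rw [Finset.univ_eq_empty, Finset.sum_empty] at hsum1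
    norm_num at hsum1
  have hzN : ∀ i, z i ∈ N := fun i => hrange ⟨i, rfl⟩
  have hznorm : ∀ i, ‖z i‖ = 1 := fun i => (hzN i).1
  have hztight : ∀ i, ⟪z i, x₀⟫ = h (z i) := fun i => (hzN i).2
  set U := Submodule.span ℝ (Set.range z) with hU
  set s := Module.finrank ℝ U with hs
  have hs1 : 1 ≤ s := by
    obtain ⟨i⟩ := hιne
    have hz0 : z i ≠ 0 := by
      intro h0
      have := hznorm i
      rw [h0, norm_zero] at this
      norm_num at this
    have hziU : z i ∈ U := Submodule.subset_span ⟨i, rfl⟩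
    have hUne : U ≠ ⊥ := by
      intro hbot
      rw [hbot, Submodule.mem_bot] at hziU
      exact hz0 hziU
    have hfr : Module.finrank ℝ U ≠ 0 := fun h0 => hUne (Submodule.finrank_eq_zero.mp h0)
    omega
  have hsd : s ≤ d := by
    have := Submodule.finrank_le U
    rwa [finrank_euclideanSpace_fin] at this
  have hvs : vectorSpan ℝ (Set.range z) ≤ U := by
    rw [vectorSpan_def]
    apply Submodule.span_le.mpr
    rintro v ⟨y, hy, z', hz', rfl⟩
    exact Submodule.sub_mem _ (Submodule.subset_span hy) (Submodule.subset_span hz')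
  have hr : Fintype.card ι ≤ s + 1 := by
    have h1 := hindep.finrank_vectorSpan_add_one
    have h2 : Module.finrank ℝ (vectorSpan ℝ (Set.range z)) ≤ s := Submodule.finrank_mono hvs
    omega
  set J := AffineSubspace.mk' x₀ Uᗮ with hJ
  have hJset : (J : Set (EuclideanSpace ℝ (Fin d))) = ⋂ i, {x | ⟪z i, x⟫ ≤ ⟪z i, x₀⟫} := by
    ext x
    simp only [Set.mem_iInter, SetLike.mem_coe, Set.mem_setOf_eq]
    constructor
    · intro hx i
      have hx' : x -ᵥ x₀ ∈ Uᗮ := AffineSubspace.mem_mk'.mp hx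
      have hz0 : ⟪z i, x - x₀⟫ = 0 :=
        (Submodule.mem_orthogonal _ _).mp hx' _ (Submodule.subset_span ⟨i, rfl⟩)
      rw [inner_sub_right] at hz0
      linarith
    · intro hx
      rw [AffineSubspace.mem_mk']
      have hkey : ∀ i, ⟪z i, x - x₀⟫ = 0 := by
        have hsum : ∑ i, w i * ⟪z i, x - x₀⟫ = 0 := by
          have h1 : ∑ i, ⟪w i • z i, x - x₀⟫ = ⟪∑ i, w i • z i, x - x₀⟫ :=
            (sum_inner _ _ _).symm
          rw [hcombo, inner_zero_left] at h1
          rw [← h1]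
          exact Finset.sum_congr rfl fun i _ => (real_inner_smul_left _ _ _).symm
        have hnonpos : ∀ i ∈ Finset.univ, w i * ⟪z i, x - x₀⟫ ≤ 0 := by
          intro i _
          have hle : ⟪z i, x - x₀⟫ ≤ 0 := by
            rw [inner_sub_right]
            have := hx i
            linarith
          exact mul_nonpos_of_nonneg_of_nonpos (hpos i).le hle
        intro i
        have := (Finset.sum_eq_zero_iff_of_nonpos hnonpos).mp hsum i (Finset.mem_univ i)
        rcases mul_eq_zero.mp this with h' | h'
        · exact absurd h' (hpos i).ne'
        · exact h'
      rw [Submodule.mem_orthogonal]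
      intro u hu
      induction hu using Submodule.span_induction with
      | mem v hv =>
          obtain ⟨i, rfl⟩ := hv
          exact hkey i
      | zero => exact inner_zero_left _
      | add a b _ _ ha hb => rw [inner_add_left, ha, hb]; ring
      | smul c a _ ha => rw [real_inner_smul_left, ha]; ring
  have hJdim : setDim (J : Set (EuclideanSpace ℝ (Fin d))) = d - s := by
    show Module.finrank ℝ (affineSpan ℝ (J : Set (EuclideanSpace ℝ (Fin d)))).direction = d - s
    rw [AffineSubspace.affineSpan_coe, hJ, AffineSubspace.direction_mk']
    have := Submodule.finrank_add_finrank_orthogonal U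
    rw [finrank_euclideanSpace_fin] at this
    omega
  have hCJ : C ⊆ (J : Set (EuclideanSpace ℝ (Fin d))) := by
    intro c hc
    rw [hJset]
    refine Set.mem_iInter.mpr fun i => ?_
    have := (hCchar c).mp hc (z i) (hznorm i)
    simp only [Set.mem_setOf_eq]
    rw [hztight i]
    exact this
  have hpoly : IsConvexPolyhedron (J : Set (EuclideanSpace ℝ (Fin d))) := by
    set e := Fintype.equivFin ι with he
    refine ⟨Fintype.card ι, fun j => -((innerSL ℝ (z (e.symm j))).toLinearMap),
      fun j => -⟪z (e.symm j), x₀⟫, ?_, ?_⟩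
    · intro j hj0
      beta_reduce at hj0
      have happ := DFunLike.congr_fun hj0 (z (e.symm j))
      simp only [LinearMap.neg_apply, ContinuousLinearMap.coe_coe, innerSL_apply_apply,
        LinearMap.zero_apply] at happ
      rw [real_inner_self_eq_norm_sq, hznorm] at happ
      norm_num at happ
    · rw [hJset]
      ext x
      simp only [Set.mem_iInter, Set.mem_setOf_eq, LinearMap.neg_apply,
        ContinuousLinearMap.coe_coe, innerSL_apply_apply, neg_le_neg_iff]
      constructor
      · intro hx j
        exact hx (e.symm j)
      · intro hx i
        have := hx (e i)
        rwa [Equiv.symm_apply_apply] at this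
  refine ⟨s, hs1, hsd, (J : Set (EuclideanSpace ℝ (Fin d))), hpoly, hJdim, hCJ, ?_⟩
  set Pin := P.filter (fun q => q ∈ (J : Set (EuclideanSpace ℝ (Fin d)))) with hPin
  have hint : ((P : Set (EuclideanSpace ℝ (Fin d))) ∩ (J : Set (EuclideanSpace ℝ (Fin d)))).ncard
      = Pin.card := by
    rw [← Set.ncard_coe_finset]
    congr 1
    ext x
    simp [hPin]
  set Pout := P.filter (fun q => ¬ q ∈ (J : Set (EuclideanSpace ℝ (Fin d)))) with hPout
  have hPsplit : Pin.card + Pout.card = P.card :=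
    Finset.card_filter_add_card_filter_not _
  have hPoutle : Pout.card ≤ Fintype.card ι * (α - 1) := by
    have hsub : Pout ⊆ Finset.univ.biUnion
        (fun i : ι => P.filter fun q => h (z i) < ⟪z i, q⟫) := by
      intro q hq
      rw [hPout, Finset.mem_filter] at hq
      obtain ⟨hqP, hqJ⟩ := hq
      rw [hJset, Set.mem_iInter] at hqJ
      push_neg at hqJ
      obtain ⟨i, hi⟩ := hqJ
      simp only [Set.mem_setOf_eq, not_le] at hi
      rw [Finset.mem_biUnion]
      refine ⟨i, Finset.mem_univ i, Finset.mem_filter.mpr ⟨hqP, ?_⟩⟩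
      rw [← hztight i]
      exact hi
    calc Pout.card ≤ _ := Finset.card_le_card hsub
    _ ≤ ∑ i : ι, (P.filter fun q => h (z i) < ⟪z i, q⟫).card := Finset.card_biUnion_le
    _ ≤ ∑ _i : ι, (α - 1) := Finset.sum_le_sum fun i _ =>
        CenterAux.card_filter_gt_hfun_le hne hα1 (z i)
    _ = Fintype.card ι * (α - 1) := by
        rw [Finset.sum_const, smul_eq_mul, Finset.card_univ]
  rw [hint]
  have hr' : Fintype.card ι * (α - 1) ≤ (s + 1) * (α - 1) := Nat.mul_le_mul_right _ hr
  have hn' : n ≤ Pin.card + (s + 1) * (α - 1) := by omega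
  have hcast : ((s:ℤ) + 1) * ((α:ℤ) - 1) = (((s + 1) * (α - 1) : ℕ) : ℤ) := by
    push_cast [Nat.cast_sub hα1]
    ring
  have hfin2 : (n : ℤ) ≤ (Pin.card : ℤ) + ((s:ℤ) + 1) * ((α:ℤ) - 1) := by
    rw [hcast]
    exact_mod_cast hn'
  linarith
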